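/- Let G = ⟨x, y | x^p = y^m = 1, x^{-1} y x = y^r⟩ with gcd(p(r-1), m) = 1, N = ⟨y⟩, and let T_0 be a sequence of exactly p elements all lying in the coset x^i N for some i ∈ [1, p-1]. For j ∈ [1, ℓ], let T_j be sequences over G with π(T_j) ∩ N ≠ ∅ and pick u_j ∈ π(T_j) ∩ N. Then for every t ∈ [1, ℓ], the set π(T_0 · T_1 · … · T_t) contains the product set π(T_0) · {u_1, u_1^r, …, u_1^{r^{p-1}}} ⋯ {u_t, u_t^r, …, u_t^{r^{p-1}}}. -/

import Mathlib

/-- The set of products of a sequence (multiset) `S` over all orderings. -/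
def piSet {G : Type*} [Group G] (S : Multiset G) : Set G :=
  {g | ∃ l : List G, (l : Multiset G) = S ∧ l.prod = g}

section aux

variable {G : Type*} [Group G] {x y : G} {p r i : ℕ}

/-- Elements of `zpowers y` commute. -/
lemma aux_comm (a b : G) (ha : a ∈ Subgroup.zpowers y) (hb : b ∈ Subgroup.zpowers y) :
    a * b = b * a := by
  obtain ⟨k, rfl⟩ := Subgroup.mem_zpowers_iff.mp ha
  obtain ⟨l, rfl⟩ := Subgroup.mem_zpowers_iff.mp hb
  rw [← zpow_add, ← zpow_add, add_comm]

lemma aux_conj_x (hrel : x⁻¹ * y * x = y ^ r) :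
    ∀ n ∈ Subgroup.zpowers y, x⁻¹ * n * x = n ^ r := by
  intro n hn
  obtain ⟨k, rfl⟩ := Subgroup.mem_zpowers_iff.mp hn
  have h1 : x⁻¹ * y ^ k * x = (x⁻¹ * y * x) ^ k := by
    have := conj_zpow (i := k) (a := x⁻¹) (b := y)
    simpa using this.symm
  rw [h1, hrel, ← zpow_natCast, ← zpow_mul, ← zpow_natCast (y ^ k), ← zpow_mul, mul_comm]

lemma aux_conj_xc (hrel : x⁻¹ * y * x = y ^ r) :
    ∀ (c : ℕ), ∀ n ∈ Subgroup.zpowers y, (x ^ c)⁻¹ * n * x ^ c = n ^ r ^ c := by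
  intro c
  induction c with
  | zero => intro n hn; simp
  | succ c ih =>
    intro n hn
    have h1 : (x ^ (c + 1))⁻¹ * n * x ^ (c + 1)
        = x⁻¹ * ((x ^ c)⁻¹ * n * x ^ c) * x := by
      rw [pow_succ]; group
    rw [h1, ih n hn, aux_conj_x hrel _ (Subgroup.pow_mem _ hn _), ← pow_mul, pow_succ]

/-- Conjugation by an element of the coset `x^c N` raises `N`-elements to the `r^c`. -/
lemma aux_conj_coset (hrel : x⁻¹ * y * x = y ^ r) (c : ℕ) (g : G)
    (hg : (x ^ c)⁻¹ * g ∈ Subgroup.zpowers y) :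
    ∀ n ∈ Subgroup.zpowers y, g⁻¹ * n * g = n ^ r ^ c := by
  intro n hn
  set h := (x ^ c)⁻¹ * g with hh
  have hgx : g = x ^ c * h := by rw [hh]; group
  have h2 : g⁻¹ * n * g = h⁻¹ * ((x ^ c)⁻¹ * n * x ^ c) * h := by rw [hgx]; group
  rw [h2, aux_conj_xc hrel c n hn]
  have hmem : n ^ r ^ c ∈ Subgroup.zpowers y := Subgroup.pow_mem _ hn _
  have hcm := aux_comm _ h hmem hg
  rw [mul_assoc, hcm]; group

/-- Product of a coset list. -/
lemma aux_prod_coset (hrel : x⁻¹ * y * x = y ^ r) :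
    ∀ l : List G, (∀ g ∈ l, (x ^ i)⁻¹ * g ∈ Subgroup.zpowers y) →
      (x ^ (i * l.length))⁻¹ * l.prod ∈ Subgroup.zpowers y := by
  intro l
  induction l with
  | nil => intro _; simpa using Subgroup.one_mem _
  | cons g l ih =>
    intro hl
    have hg := hl g (List.mem_cons_self)
    have hlp := ih (fun a ha => hl a (List.mem_cons_of_mem _ ha))
    have hkey : (x ^ (i * (g :: l).length))⁻¹ * (g :: l).prod
        = ((x ^ (i * l.length))⁻¹ * ((x ^ i)⁻¹ * g) * x ^ (i * l.length))
          * ((x ^ (i * l.length))⁻¹ * l.prod) := by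
      have : i * (g :: l).length = i + i * l.length := by
        simp [List.length_cons, Nat.mul_succ, Nat.mul_add]; ring
      rw [this, pow_add, List.prod_cons]; group
    rw [hkey]
    refine Subgroup.mul_mem _ ?_ hlp
    have := aux_conj_xc hrel (x := x) (i * l.length) _ hg
    rw [this]
    exact Subgroup.pow_mem _ hg _

lemma aux_period (hrel : x⁻¹ * y * x = y ^ r) (hxp : x ^ p = 1) :
    ∀ n ∈ Subgroup.zpowers y, n ^ r ^ p = n := by
  intro n hn
  have := aux_conj_xc hrel (x := x) p n hn
  rw [hxp] at this
  simpa using this.symm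

lemma aux_modp (hrel : x⁻¹ * y * x = y ^ r) (hxp : x ^ p = 1) :
    ∀ n ∈ Subgroup.zpowers y, ∀ c : ℕ, n ^ r ^ c = n ^ r ^ (c % p) := by
  have hq : ∀ q : ℕ, ∀ n ∈ Subgroup.zpowers y, n ^ r ^ (p * q) = n := by
    intro q
    induction q with
    | zero => intro n hn; simp
    | succ q ih =>
      intro n hn
      have : r ^ (p * (q + 1)) = r ^ (p * q) * r ^ p := by rw [← pow_add, Nat.mul_succ]
      rw [this, pow_mul, aux_period hrel hxp _ (Subgroup.pow_mem _ hn _), ih n hn]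
  intro n hn c
  have hc : r ^ c = r ^ (p * (c / p)) * r ^ (c % p) := by
    rw [← pow_add]
    exact congrArg (r ^ ·) (Nat.div_add_mod c p).symm
  rw [hc, pow_mul, hq _ _ hn]


lemma aux_pow_list_prod (hN : ∀ g ∈ Subgroup.zpowers y, True) :
    True := trivial

/-- `(l.prod)^n = (l.map (·^n)).prod` when all elements lie in `zpowers y`. -/
lemma aux_prod_pow :
    ∀ l : List G, (∀ g ∈ l, g ∈ Subgroup.zpowers y) → ∀ n : ℕ,
      l.prod ^ n = (l.map (· ^ n)).prod := by
  intro l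
  induction l with
  | nil => intro _ n; simp
  | cons a l ih =>
    intro hl n
    have ha := hl a (List.mem_cons_self)
    have hlm : ∀ g ∈ l, g ∈ Subgroup.zpowers y := fun g hg => hl g (List.mem_cons_of_mem _ hg)
    have hcomm : Commute a l.prod :=
      (aux_comm a l.prod ha (Subgroup.list_prod_mem _ hlm))
    rw [List.prod_cons, hcomm.mul_pow, List.map_cons, List.prod_cons, ih hlm n]

lemma aux_pairwise_commute :
    ∀ l : List G, (∀ g ∈ l, g ∈ Subgroup.zpowers y) → l.Pairwise Commute := by
  intro l
  induction l with
  | nil => intro _; exact List.Pairwise.nil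
  | cons a l ih =>
    intro hl
    refine List.Pairwise.cons ?_ (ih fun g hg => hl g (List.mem_cons_of_mem _ hg))
    intro b hb
    exact aux_comm a b (hl a (List.mem_cons_self)) (hl b (List.mem_cons_of_mem _ hb))

lemma aux_coe_join : ∀ ls : List (List G),
    ((ls.flatten : List G) : Multiset G) = (ls.map (fun l : List G => (↑l : Multiset G))).sum := by
  intro ls
  induction ls with
  | nil => simp
  | cons a ls ih => rw [List.flatten_cons, List.map_cons, List.sum_cons, ← ih, Multiset.coe_add]

/-- The key interleaving lemma. -/
lemma aux_key (hrel : x⁻¹ * y * x = y ^ r) :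
    ∀ (l0 : List G) (B : List (List G × ℕ)),
      (∀ g ∈ l0, (x ^ i)⁻¹ * g ∈ Subgroup.zpowers y) →
      (∀ b ∈ B, b.1.prod ∈ Subgroup.zpowers y) →
      ∃ L : List G,
        (L : Multiset G) = (l0 : Multiset G) + (B.map (fun q => ((q.1 : Multiset G)))).sum ∧
        L.prod = l0.prod *
          (B.map (fun q => q.1.prod ^ (r ^ (i * (l0.length - q.2))))).prod := by
  intro l0
  induction l0 with
  | nil =>
    intro B _ hB
    refine ⟨(B.map Prod.fst).flatten, ?_, ?_⟩
    · rw [aux_coe_join, List.map_map]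
      simp only [Function.comp_def]
      simp
    · rw [List.prod_flatten, List.map_map]
      simp only [Function.comp_def]
      simp
  | cons g l0 ih =>
    intro B hl0 hB
    have hg := hl0 g (List.mem_cons_self)
    have hl0' : ∀ a ∈ l0, (x ^ i)⁻¹ * a ∈ Subgroup.zpowers y :=
      fun a ha => hl0 a (List.mem_cons_of_mem _ ha)
    set P : List G × ℕ → Bool := fun q => q.2 == 0 with hP
    set B0 := B.filter P with hB0def
    set B1 := B.filter (fun q => !P q) with hB1def
    have hperm : List.Perm (B0 ++ B1) B := List.filter_append_perm P B
    have hB0mem : ∀ q ∈ B0, q ∈ B ∧ q.2 = 0 := by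
      intro q hq
      have := List.mem_filter.mp hq
      exact ⟨this.1, by simpa [hP] using this.2⟩
    have hB1mem : ∀ q ∈ B1, q ∈ B ∧ q.2 ≠ 0 := by
      intro q hq
      have := List.mem_filter.mp hq
      exact ⟨this.1, by simpa [hP] using this.2⟩
    set B1' : List (List G × ℕ) := B1.map (fun q => (q.1, q.2 - 1)) with hB1'def
    have hB1'cond : ∀ b ∈ B1', b.1.prod ∈ Subgroup.zpowers y := by
      intro b hb
      obtain ⟨q, hq, rfl⟩ := List.mem_map.mp hb
      exact hB q (hB1mem q hq).1
    obtain ⟨L', hL'ms, hL'prod⟩ := ih B1' hl0' hB1'cond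
    set J := (B0.map Prod.fst).flatten with hJdef
    refine ⟨J ++ g :: L', ?_, ?_⟩
    · -- multiset equality
      have hJms : (J : Multiset G) = (B0.map (fun q => (↑q.1 : Multiset G))).sum := by
        rw [hJdef, aux_coe_join, List.map_map]
        simp only [Function.comp_def]
      have hB1'ms : (B1'.map (fun q => (↑q.1 : Multiset G))).sum
          = (B1.map (fun q => (↑q.1 : Multiset G))).sum := by
        rw [hB1'def, List.map_map]
        simp only [Function.comp_def]
      have hsum : (B0.map (fun q => (↑q.1 : Multiset G))).sum
          + (B1.map (fun q => (↑q.1 : Multiset G))).sum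
          = (B.map (fun q => (↑q.1 : Multiset G))).sum := by
        have := (hperm.map (fun q => (↑q.1 : Multiset G))).sum_eq
        rw [List.map_append, List.sum_append] at this
        exact this
      rw [← Multiset.coe_add]
      rw [hJms]
      have hgL' : ((g :: L' : List G) : Multiset G) = g ::ₘ (L' : Multiset G) := rfl
      rw [hgL', hL'ms, hB1'ms]
      rw [← hsum]
      have hgl0 : ((g :: l0 : List G) : Multiset G) = g ::ₘ (l0 : Multiset G) := rfl
      rw [hgl0]
      rw [← Multiset.singleton_add, ← Multiset.singleton_add]
      abel
    · -- product equality
      set c := i * (g :: l0).length with hcdef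
      set V := (B0.map (fun q => q.1.prod)).prod with hVdef
      have hJprod : J.prod = V := by
        rw [hJdef, List.prod_flatten, List.map_map]
        simp only [Function.comp_def]
        rfl
      have hVmem : V ∈ Subgroup.zpowers y := by
        refine Subgroup.list_prod_mem _ ?_
        intro a ha
        obtain ⟨q, hq, rfl⟩ := List.mem_map.mp ha
        exact hB q (hB0mem q hq).1
      have hQ1 : (B1'.map (fun q => q.1.prod ^ (r ^ (i * (l0.length - q.2))))).prod
          = (B1.map (fun q => q.1.prod ^ (r ^ (i * ((g :: l0).length - q.2))))).prod := by
        rw [hB1'def, List.map_map]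
        refine congrArg List.prod (List.map_congr_left ?_)
        intro q hq
        have h2 := (hB1mem q hq).2
        simp only [Function.comp_def, List.length_cons]
        have he : l0.length - (q.2 - 1) = l0.length + 1 - q.2 := by omega
        rw [he]
      have hcoset : (x ^ c)⁻¹ * (g * l0.prod) ∈ Subgroup.zpowers y := by
        have := aux_prod_coset (i := i) hrel (g :: l0) hl0
        rwa [List.prod_cons] at this
      have hmove : V * (g * l0.prod) = (g * l0.prod) * V ^ r ^ c := by
        have hconj := aux_conj_coset hrel c (g * l0.prod) hcoset V hVmem
        calc V * (g * l0.prod)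
            = (g * l0.prod) * ((g * l0.prod)⁻¹ * V * (g * l0.prod)) := by group
          _ = (g * l0.prod) * V ^ r ^ c := by rw [hconj]
      have hVpow : V ^ r ^ c
          = (B0.map (fun q => q.1.prod ^ (r ^ (i * ((g :: l0).length - q.2))))).prod := by
        rw [hVdef, aux_prod_pow (B0.map (fun q => q.1.prod)) ?memN (r ^ c), List.map_map]
        case memN =>
          intro a ha
          obtain ⟨q, hq, rfl⟩ := List.mem_map.mp ha
          exact hB q (hB0mem q hq).1
        refine congrArg List.prod (List.map_congr_left ?_)
        intro q hq
        have h2 := (hB0mem q hq).2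
        simp only [Function.comp_def, List.length_cons, hcdef, h2, Nat.sub_zero]
      have hmerge : (B0.map (fun q => q.1.prod ^ (r ^ (i * ((g :: l0).length - q.2))))).prod
          * (B1.map (fun q => q.1.prod ^ (r ^ (i * ((g :: l0).length - q.2))))).prod
          = (B.map (fun q => q.1.prod ^ (r ^ (i * ((g :: l0).length - q.2))))).prod := by
        set h := fun q : List G × ℕ => q.1.prod ^ (r ^ (i * ((g :: l0).length - q.2))) with hhdef
        have hpw : ((B0 ++ B1).map h).Pairwise Commute := by
          refine aux_pairwise_commute (y := y) _ ?_
          intro a ha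
          obtain ⟨q, hq, rfl⟩ := List.mem_map.mp ha
          have hqB : q ∈ B := by
            rcases List.mem_append.mp hq with h' | h'
            · exact (hB0mem q h').1
            · exact (hB1mem q h').1
          exact Subgroup.pow_mem _ (hB q hqB) _
        have := (hperm.map h).prod_eq' hpw
        rw [List.map_append, List.prod_append] at this
        exact this
      rw [List.prod_append, List.prod_cons, hJprod, hL'prod, hQ1]
      rw [List.prod_cons]
      calc V * (g * (l0.prod * (B1.map (fun q => q.1.prod ^ (r ^ (i * ((g :: l0).length - q.2))))).prod))
          = (V * (g * l0.prod)) * (B1.map (fun q => q.1.prod ^ (r ^ (i * ((g :: l0).length - q.2))))).prod := by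
            group
        _ = ((g * l0.prod) * V ^ r ^ c) * (B1.map (fun q => q.1.prod ^ (r ^ (i * ((g :: l0).length - q.2))))).prod := by
            rw [hmove]
        _ = (g * l0.prod) * ((B0.map (fun q => q.1.prod ^ (r ^ (i * ((g :: l0).length - q.2))))).prod * (B1.map (fun q => q.1.prod ^ (r ^ (i * ((g :: l0).length - q.2))))).prod) := by
            rw [hVpow]; group
        _ = (g * l0.prod) * (B.map (fun q => q.1.prod ^ (r ^ (i * ((g :: l0).length - q.2))))).prod := by
            rw [hmerge]


lemma aux_range_sum {M : Type*} [AddCommMonoid M] (f : ℕ → M) :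
    ∀ t : ℕ, ((List.range t).map (fun j => f (j + 1))).sum = ∑ j ∈ Finset.Icc 1 t, f j := by
  intro t
  induction t with
  | zero => simp
  | succ t ih =>
    rw [List.range_succ, List.map_append, List.sum_append,
      Finset.sum_Icc_succ_top (by omega), ← ih]
    simp

end aux

theorem stmt_14 (p m r : ℕ) (G : Type*) [Group G] [Fintype G] (x y : G)
    (hp : p.Prime) (hm : 0 < m) (hr : 0 < r)
    (hcard : Fintype.card G = p * m)
    (hox : orderOf x = p) (hoy : orderOf y = m)
    (hrel : x⁻¹ * y * x = y ^ r)
    (hgen : Subgroup.closure ({x, y} : Set G) = ⊤)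
    (hgcd : Nat.gcd (p * (r - 1)) m = 1)
    (i : ℕ) (hi1 : 1 ≤ i) (hip : i ≤ p - 1)
    (T0 : Multiset G) (hT0card : Multiset.card T0 = p)
    (hT0 : ∀ g ∈ T0, (x ^ i)⁻¹ * g ∈ Subgroup.zpowers y)
    (ℓ : ℕ) (T : ℕ → Multiset G) (u : ℕ → G)
    (hu : ∀ j, 1 ≤ j → j ≤ ℓ → u j ∈ piSet (T j) ∧ u j ∈ Subgroup.zpowers y) :
    ∀ t, 1 ≤ t → t ≤ ℓ → ∀ a ∈ piSet T0, ∀ e : ℕ → ℕ, (∀ j, e j ≤ p - 1) →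
      a * (((List.range t).map fun j => u (j + 1) ^ (r ^ (e (j + 1)))).prod) ∈
        piSet (T0 + ∑ j ∈ Finset.Icc 1 t, T j) := by
  intro t ht1 htl a ha e he
  haveI : Fact p.Prime := ⟨hp⟩
  haveI : NeZero p := ⟨hp.pos.ne'⟩
  have hp2 := hp.two_le
  obtain ⟨l0, hl0ms, hl0prod⟩ := ha
  have hl0len : l0.length = p := by
    have := congrArg Multiset.card hl0ms
    simpa [Multiset.coe_card, hT0card] using this
  have hl0mem : ∀ g ∈ l0, (x ^ i)⁻¹ * g ∈ Subgroup.zpowers y := by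
    intro g hg
    exact hT0 g (by rw [← hl0ms]; exact Multiset.mem_coe.mpr hg)
  have hxp : x ^ p = 1 := by rw [← hox]; exact pow_orderOf_eq_one x
  -- choose witness lists for the u j
  have hex : ∀ j : ℕ, ∃ l : List G, 1 ≤ j → j ≤ ℓ → ((l : Multiset G) = T j ∧ l.prod = u j) := by
    intro j
    by_cases h1 : 1 ≤ j ∧ j ≤ ℓ
    · obtain ⟨l, hl⟩ := (hu j h1.1 h1.2).1
      exact ⟨l, fun _ _ => hl⟩
    · exact ⟨[], fun ha hb => absurd ⟨ha, hb⟩ h1⟩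
  choose ls hls using hex
  -- positions
  have hine0 : (i : ZMod p) ≠ 0 := by
    intro h
    rw [ZMod.natCast_eq_zero_iff] at h
    have := Nat.le_of_dvd (by omega) h
    omega
  set d : ℕ → ℕ := fun j => ((e j : ZMod p) * (i : ZMod p)⁻¹).val with hd
  have hdlt : ∀ j, d j < p := fun j => ZMod.val_lt _
  have hdmod : ∀ j, (i * d j) % p = e j % p := by
    intro j
    have hcast : ((d j : ℕ) : ZMod p) = (e j : ZMod p) * (i : ZMod p)⁻¹ :=
      ZMod.natCast_rightInverse _
    have hmain : ((i * d j : ℕ) : ZMod p) = ((e j : ℕ) : ZMod p) := by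
      push_cast
      rw [hcast, mul_comm ((e j : ZMod p)) _, ← mul_assoc, mul_inv_cancel₀ hine0, one_mul]
    exact (ZMod.natCast_eq_natCast_iff _ _ _).mp hmain
  set B := (List.range t).map (fun j => (ls (j + 1), p - d (j + 1))) with hBdef
  have hBcond : ∀ b ∈ B, b.1.prod ∈ Subgroup.zpowers y := by
    intro b hb
    obtain ⟨j, hj, rfl⟩ := List.mem_map.mp hb
    have hjt : j < t := List.mem_range.mp hj
    have h1 : 1 ≤ j + 1 := by omega
    have h2 : j + 1 ≤ ℓ := by omega
    rw [(hls (j + 1) h1 h2).2]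
    exact (hu (j + 1) h1 h2).2
  obtain ⟨L, hLms, hLprod⟩ := aux_key hrel l0 B hl0mem hBcond
  refine ⟨L, ?_, ?_⟩
  · rw [hLms, hl0ms]
    congr 1
    rw [hBdef, List.map_map]
    have hmc : (List.range t).map ((fun q : List G × ℕ => (↑q.1 : Multiset G)) ∘
        (fun j => (ls (j + 1), p - d (j + 1)))) = (List.range t).map (fun j => T (j + 1)) := by
      refine List.map_congr_left ?_
      intro j hj
      have hjt : j < t := List.mem_range.mp hj
      have h1 : 1 ≤ j + 1 := by omega
      have h2 : j + 1 ≤ ℓ := by omega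
      simp only [Function.comp_def]
      rw [(hls (j + 1) h1 h2).1]
    rw [hmc, aux_range_sum]
  · rw [hLprod, hl0prod, hl0len]
    congr 1
    rw [hBdef, List.map_map]
    refine congrArg List.prod (List.map_congr_left ?_)
    intro j hj
    have hjt : j < t := List.mem_range.mp hj
    have h1 : 1 ≤ j + 1 := by omega
    have h2 : j + 1 ≤ ℓ := by omega
    simp only [Function.comp_def]
    rw [(hls (j + 1) h1 h2).2]
    have hd' : p - (p - d (j + 1)) = d (j + 1) := by have := hdlt (j + 1); omega
    rw [hd']
    have humem := (hu (j + 1) h1 h2).2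
    have hemod : e (j + 1) % p = e (j + 1) := Nat.mod_eq_of_lt (by have := he (j + 1); omega)
    rw [aux_modp hrel hxp _ humem (i * d (j + 1)), hdmod, hemod]
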